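/- For all real x and all p with 1 ≤ p ≤ 2, one has 2|x-1|^p - |x|^p + 1 ≥ p(1-x). -/

import Mathlib

open Real Set
open scoped NNReal

/-- Subadditivity of `t ↦ t ^ q` for `0 ≤ q ≤ 1` on nonnegative reals, in the form we need. -/
lemma aux_subadd {u q : ℝ} (hu : 0 ≤ u) (hq0 : 0 ≤ q) (hq1 : q ≤ 1) :
    (1 + u) ^ q ≤ 1 + u ^ q := by
  have h := NNReal.rpow_add_le_add_rpow 1 u.toNNReal hq0 hq1
  have h2 : ((1 + u.toNNReal : ℝ≥0) : ℝ) ^ q ≤ ((1 : ℝ≥0) : ℝ) ^ q + ((u.toNNReal : ℝ≥0) : ℝ) ^ q := by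
    rw [← NNReal.coe_rpow, ← NNReal.coe_rpow, ← NNReal.coe_rpow, ← NNReal.coe_add]
    exact_mod_cast h
  simpa [Real.coe_toNNReal u hu] using h2

/-- Key lemma A: `(1+u)^p ≤ 1 + p*u + u^p` for `u ≥ 0`, `1 ≤ p ≤ 2`. -/
lemma aux_A {p : ℝ} (hp1 : 1 ≤ p) (hp2 : p ≤ 2) {u : ℝ} (hu : 0 ≤ u) :
    (1 + u) ^ p ≤ 1 + p * u + u ^ p := by
  set f : ℝ → ℝ := fun u => 1 + p * u + u ^ p - (1 + u) ^ p with hf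
  have hderiv : ∀ u : ℝ, HasDerivAt f (p + p * u ^ (p - 1) - p * (1 + u) ^ (p - 1)) u := by
    intro u
    have h1 : HasDerivAt (fun u : ℝ => u ^ p) (p * u ^ (p - 1)) u :=
      Real.hasDerivAt_rpow_const (Or.inr hp1)
    have h2 : HasDerivAt (fun u : ℝ => (1 + u) ^ p) (p * (1 + u) ^ (p - 1)) u := by
      have h3 : HasDerivAt (fun u : ℝ => 1 + u) 1 u := (hasDerivAt_id u).const_add 1
      have := (Real.hasDerivAt_rpow_const (x := 1 + u) (p := p) (Or.inr hp1)).comp u h3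
      exact this.congr_deriv (mul_one _)
    have h4 : HasDerivAt (fun u : ℝ => 1 + p * u) p u := by
      simpa using ((hasDerivAt_id u).const_mul p).const_add 1
    have := (h4.add h1).sub h2
    exact this
  have hmono : MonotoneOn f (Ici 0) := by
    apply monotoneOn_of_deriv_nonneg (convex_Ici 0)
    · exact (Differentiable.continuous fun u => (hderiv u).differentiableAt).continuousOn
    · exact fun u _ => ((hderiv u).differentiableAt).differentiableWithinAt
    · intro u hu
      rw [interior_Ici] at hu
      rw [(hderiv u).deriv]
      have hup : 0 < u := hu
      have hsub : (1 + u) ^ (p - 1) ≤ 1 + u ^ (p - 1) :=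
        aux_subadd hup.le (by linarith) (by linarith)
      have hppos : 0 < p := by linarith
      nlinarith [mul_le_mul_of_nonneg_left hsub hppos.le]
  have h0 : f 0 = 0 := by
    have : (0 : ℝ) ^ p = 0 := Real.zero_rpow (by positivity)
    simp [hf, this]
  have := hmono (self_mem_Ici) (mem_Ici.mpr hu) hu
  rw [h0] at this
  simp only [hf] at this
  linarith

/-- Key lemma B: `(1-t)^p ≤ 1 - p*t + t^p` for `t ∈ [0,1]`, `1 ≤ p ≤ 2`. -/
lemma aux_B {p : ℝ} (hp1 : 1 ≤ p) (hp2 : p ≤ 2) {t : ℝ} (ht0 : 0 ≤ t) (ht1 : t ≤ 1) :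
    (1 - t) ^ p ≤ 1 - p * t + t ^ p := by
  set f : ℝ → ℝ := fun t => 1 - p * t + t ^ p - (1 - t) ^ p with hf
  have hderiv : ∀ t : ℝ, HasDerivAt f (-p + p * t ^ (p - 1) + p * (1 - t) ^ (p - 1)) t := by
    intro t
    have h1 : HasDerivAt (fun t : ℝ => t ^ p) (p * t ^ (p - 1)) t :=
      Real.hasDerivAt_rpow_const (Or.inr hp1)
    have h2 : HasDerivAt (fun t : ℝ => (1 - t) ^ p) (p * (1 - t) ^ (p - 1) * (-1)) t := by
      have h3 : HasDerivAt (fun t : ℝ => 1 - t) (-1) t := by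
        simpa using (hasDerivAt_id t).const_sub 1
      exact (Real.hasDerivAt_rpow_const (x := 1 - t) (p := p) (Or.inr hp1)).comp t h3
    have h4 : HasDerivAt (fun t : ℝ => 1 - p * t) (-p) t := by
      simpa using ((hasDerivAt_id t).const_mul p).const_sub 1
    have := (h4.add h1).sub h2
    refine this.congr_deriv ?_
    ring
  have hmono : MonotoneOn f (Icc 0 1) := by
    apply monotoneOn_of_deriv_nonneg (convex_Icc 0 1)
    · exact (Differentiable.continuous fun t => (hderiv t).differentiableAt).continuousOn
    · exact fun t _ => ((hderiv t).differentiableAt).differentiableWithinAt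
    · intro t ht
      rw [interior_Icc] at ht
      rw [(hderiv t).deriv]
      have ht0' : 0 < t := ht.1
      have ht1' : t < 1 := ht.2
      have h5 : t ^ (1 : ℝ) ≤ t ^ (p - 1) :=
        Real.rpow_le_rpow_of_exponent_ge ht0' ht1'.le (by linarith)
      have h6 : (1 - t) ^ (1 : ℝ) ≤ (1 - t) ^ (p - 1) :=
        Real.rpow_le_rpow_of_exponent_ge (by linarith) (by linarith) (by linarith)
      rw [Real.rpow_one] at h5 h6
      have hppos : 0 < p := by linarith
      nlinarith
  have h0 : f 0 = 0 := by
    have : (0 : ℝ) ^ p = 0 := Real.zero_rpow (by positivity)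
    simp [hf, this]
  have := hmono (by constructor <;> norm_num) (mem_Icc.mpr ⟨ht0, ht1⟩) ht0
  rw [h0] at this
  simp only [hf] at this
  linarith

theorem stmt0 (x p : ℝ) (hp1 : 1 ≤ p) (hp2 : p ≤ 2) :
    2 * |x - 1| ^ p - |x| ^ p + 1 ≥ p * (1 - x) := by
  have hppos : 0 < p := by linarith
  rcases le_or_gt x 0 with hx | hx
  · -- x ≤ 0 : |x-1| = 1 - x = 1 + s, |x| = -x = s with s = -x ≥ 0
    set s := -x with hs
    have hs0 : 0 ≤ s := by simp [hs]; linarith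
    have h1 : |x - 1| = 1 + s := by rw [abs_of_nonpos (by linarith)]; ring
    have h2 : |x| = s := by rw [abs_of_nonpos hx]
    rw [h1, h2]
    have hber : 1 + p * s ≤ (1 + s) ^ p :=
      one_add_mul_self_le_rpow_one_add (by linarith) hp1
    have hmono : s ^ p ≤ (1 + s) ^ p :=
      Real.rpow_le_rpow hs0 (by linarith) hppos.le
    have hx1 : 1 - x = 1 + s := by rw [hs]; ring
    rw [ge_iff_le, hx1]
    nlinarith
  · rcases le_or_gt x 1 with hx1 | hx1
    · -- 0 < x ≤ 1 : t = 1 - x ∈ [0,1]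
      set t := 1 - x with ht
      have ht0 : 0 ≤ t := by simp [ht]; linarith
      have ht1 : t ≤ 1 := by simp [ht]; linarith
      have h1 : |x - 1| = t := by rw [abs_of_nonpos (by linarith)]; ring
      have h2 : |x| = 1 - t := by rw [abs_of_nonneg hx.le]; ring
      rw [h1, h2]
      have hB := aux_B hp1 hp2 ht0 ht1
      have htp : 0 ≤ t ^ p := Real.rpow_nonneg ht0 p
      rw [ge_iff_le]
      nlinarith
    · -- x > 1 : u = x - 1 ≥ 0
      set u := x - 1 with hu
      have hu0 : 0 ≤ u := by simp [hu]; linarith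
      have h1 : |x - 1| = u := by rw [abs_of_nonneg (by linarith)]
      have h2 : |x| = 1 + u := by rw [abs_of_nonneg (by linarith)]; ring
      rw [h1, h2]
      have hA := aux_A hp1 hp2 hu0
      have hup : 0 ≤ u ^ p := Real.rpow_nonneg hu0 p
      have hx1' : 1 - x = -u := by rw [hu]; ring
      rw [ge_iff_le, hx1']
      nlinarith
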